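/- Let n be a nonnegative integer, let α, γ > -1 and let k > 0 be real with (k+1)α > -1 and (k+1)γ > -1. Then the Krein-like moment of the Jacobi Rakhmanov density satisfies ∫_{-1}^{1} (1−x)^{(k+1)α} (1+x)^{(k+1)γ} [P_n^{(α,γ)}(x)]² dx = [2^{(k+1)(α+γ)+1} Γ(α(k+1)+1) Γ(γ(k+1)+1) / Γ((k+1)(α+γ)+2)] · C(n+α, n)² · Σ_{j₁=0}^{n} Σ_{j₂=0}^{n} [((k+1)α+1)_{j₁+j₂} / ((k+1)(α+γ)+2)_{j₁+j₂}] · [(−n)_{j₁} (n+α+γ+1)_{j₁} (−n)_{j₂} (n+α+γ+1)_{j₂}] / [(α+1)_{j₁} (α+1)_{j₂} j₁! j₂!]. -/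

import Mathlib

open MeasureTheory Finset Real

/-- Pochhammer symbol `(a)_k = a (a+1) ⋯ (a+k-1)`. -/
noncomputable def poch (a : ℝ) (k : ℕ) : ℝ := ∏ i ∈ Finset.range k, (a + i)

/-- Generalized binomial coefficient `C(a, j) = (a-j+1)_j / j!`. -/
noncomputable def gbinom (a : ℝ) (j : ℕ) : ℝ := poch (a - j + 1) j / (j.factorial : ℝ)

/-- Generalized Laguerre polynomial `L_n^{(α)}`. -/
noncomputable def Lag (α : ℝ) (n : ℕ) (x : ℝ) : ℝ :=
  ∑ i ∈ Finset.range (n + 1),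
    ((-1 : ℝ) ^ i / (i.factorial : ℝ)) * gbinom ((n : ℝ) + α) (n - i) * x ^ i

/-- Physicists' Hermite polynomial `H_n`. -/
noncomputable def Herm (n : ℕ) (x : ℝ) : ℝ :=
  ∑ k ∈ Finset.range (n / 2 + 1),
    ((-1 : ℝ) ^ k * (n.factorial : ℝ) / ((k.factorial : ℝ) * ((n - 2 * k).factorial : ℝ))) *
      (2 * x) ^ (n - 2 * k)

/-- Jacobi polynomial `P_n^{(α,γ)}`. -/
noncomputable def Jac (α γ : ℝ) (n : ℕ) (x : ℝ) : ℝ :=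
  ∑ k ∈ Finset.range (n + 1),
    gbinom ((n : ℝ) + α) (n - k) * gbinom ((n : ℝ) + γ) k *
      ((x - 1) / 2) ^ k * ((x + 1) / 2) ^ (n - k)

/-- Terminating Lauricella function of type A. -/
noncomputable def lauricellaA {r : ℕ} (a : ℝ) (m : Fin r → ℕ) (c x : Fin r → ℝ) : ℝ :=
  ∑ j ∈ Fintype.piFinset (fun i => Finset.range (m i + 1)),
    poch a (∑ i, j i) *
      ∏ i, (poch (-(m i : ℝ)) (j i) / (poch (c i) (j i) * ((j i).factorial : ℝ)) * x i ^ (j i))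

/-- Terminating Gauss hypergeometric sum `₂F₁(-k, b; c; x)`. -/
noncomputable def hyp2F1 (k : ℕ) (b c x : ℝ) : ℝ :=
  ∑ j ∈ Finset.range (k + 1),
    poch (-(k : ℝ)) j * poch b j / (poch c j * (j.factorial : ℝ)) * x ^ j

/-- Terminating hypergeometric sum `₃F₂(-k, b₁, b₂; c₁, c₂; x)`. -/
noncomputable def hyp3F2 (k : ℕ) (b₁ b₂ c₁ c₂ x : ℝ) : ℝ :=
  ∑ j ∈ Finset.range (k + 1),
    poch (-(k : ℝ)) j * poch b₁ j * poch b₂ j /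
      (poch c₁ j * poch c₂ j * (j.factorial : ℝ)) * x ^ j

/-- Gauss hypergeometric series `₂F₁(a, b; c; x)` (a terminating series when `a` or `b`
is a nonpositive integer). -/
noncomputable def hypSum (a b c x : ℝ) : ℝ :=
  ∑' j : ℕ, poch a j * poch b j / (poch c j * (j.factorial : ℝ)) * x ^ j

/-- Terminating Appell function `F₂(a; -m₁, -m₂; c₁, c₂; x₁, x₂)`. -/
noncomputable def appellF2 (a : ℝ) (m₁ m₂ : ℕ) (c₁ c₂ x₁ x₂ : ℝ) : ℝ :=
  ∑ j₁ ∈ Finset.range (m₁ + 1), ∑ j₂ ∈ Finset.range (m₂ + 1),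
    poch a (j₁ + j₂) * poch (-(m₁ : ℝ)) j₁ * poch (-(m₂ : ℝ)) j₂ /
      (poch c₁ j₁ * poch c₂ j₂ * (j₁.factorial : ℝ) * (j₂.factorial : ℝ)) * x₁ ^ j₁ * x₂ ^ j₂

/-- `1/z!` with the convention that it vanishes for negative integers `z`. -/
noncomputable def invFacZ (z : ℤ) : ℝ := if 0 ≤ z then ((z.toNat.factorial : ℕ) : ℝ)⁻¹ else 0

/-- Pochhammer symbol extended to integer index via `(a)_k = Γ(a+k)/Γ(a)` for negative `k`. -/
noncomputable def pochZ (a : ℝ) (k : ℤ) : ℝ :=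
  if 0 ≤ k then poch a k.toNat else Real.Gamma (a + (k : ℝ)) / Real.Gamma a

lemma poch_zero (a : ℝ) : poch a 0 = 1 := by simp [poch]

lemma poch_succ (a : ℝ) (k : ℕ) : poch a (k+1) = poch a k * (a + k) := by
  simp [poch, Finset.prod_range_succ]

lemma poch_add (a : ℝ) (s t : ℕ) : poch a (s + t) = poch a s * poch (a + s) t := by
  induction t with
  | zero => simp [poch]
  | succ t ih => rw [← Nat.add_assoc, poch_succ, ih, poch_succ]; push_cast; ring

lemma poch_pos {a : ℝ} (ha : 0 < a) (k : ℕ) : 0 < poch a k := by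
  refine Finset.prod_pos fun i _ => by positivity

lemma poch_eq_ascPochhammer (a : ℝ) (k : ℕ) : poch a k = (ascPochhammer ℝ k).eval a := by
  induction k with
  | zero => simp [poch]
  | succ k ih => rw [poch_succ, ascPochhammer_succ_right]; simp [ih]

lemma gbinom_eq_choose (a : ℝ) (j : ℕ) : gbinom a j = Ring.choose a j := by
  have h := Ring.factorial_nsmul_multichoose_eq_ascPochhammer (a - j + 1) j
  rw [Polynomial.ascPochhammer_smeval_eq_eval] at h
  rw [Ring.choose, gbinom, poch_eq_ascPochhammer, ← h, nsmul_eq_mul]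
  field_simp

lemma poch_one (n : ℕ) : poch 1 n = n.factorial := by
  induction n with
  | zero => simp [poch]
  | succ n ih => rw [poch_succ, ih, Nat.factorial_succ]; push_cast; ring

lemma poch_neg (a : ℝ) (j : ℕ) : poch (-a) j = (-1)^j * poch (a - j + 1) j := by
  rw [poch, poch, ← Finset.prod_range_reflect]
  have step : ∀ i ∈ Finset.range j, (-a + ((j - 1 - i : ℕ) : ℝ)) = (-1) * (a - j + 1 + i) := by
    intro i hi
    rw [Finset.mem_range] at hi
    have : ((j - 1 - i : ℕ) : ℝ) = (j : ℝ) - 1 - i := by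
      rw [Nat.cast_sub (by omega), Nat.cast_sub (by omega)]; simp
    rw [this]; ring
  rw [Finset.prod_congr rfl step, Finset.prod_mul_distrib, Finset.prod_const,
    Finset.card_range]

-- Chu-Vandermonde
lemma vandermonde (x y : ℝ) (j : ℕ) :
    ∑ k ∈ Finset.range (j+1), gbinom x k * gbinom y (j - k) = gbinom (x+y) j := by
  simp only [gbinom_eq_choose]
  rw [Ring.add_choose_eq j (Commute.all x y)]
  rw [Finset.Nat.sum_antidiagonal_eq_sum_range_succ (fun a b => Ring.choose x a * Ring.choose y b)]

lemma gbinom_mul_choose (a : ℝ) (p q : ℕ) (h : q ≤ p) :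
    gbinom a p * (p.choose q : ℝ) = gbinom a q * gbinom (a - q) (p - q) := by
  simp only [gbinom_eq_choose]
  have := Ring.choose_smul_choose a h
  rw [nsmul_eq_mul] at this
  rw [mul_comm, ← this]

lemma coeff_eq (α γ : ℝ) (n j : ℕ) (hj : j ≤ n) :
    ∑ k ∈ Finset.range (j+1),
      gbinom ((n:ℝ)+α) (n-k) * gbinom ((n:ℝ)+γ) k * (((n-k).choose (j-k) : ℕ) : ℝ)
    = gbinom ((n:ℝ)+α) (n-j) * gbinom ((n:ℝ)+α+γ+j) j := by
  have step : ∀ k ∈ Finset.range (j+1),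
      gbinom ((n:ℝ)+α) (n-k) * gbinom ((n:ℝ)+γ) k * (((n-k).choose (j-k) : ℕ) : ℝ)
      = gbinom ((n:ℝ)+α) (n-j) * (gbinom ((n:ℝ)+γ) k * gbinom (α+j) (j-k)) := by
    intro k hk
    rw [Finset.mem_range] at hk
    have hkj : k ≤ j := by omega
    have hsym : (n-k).choose (j-k) = (n-k).choose (n-j) := by
      rw [← Nat.choose_symm (by omega)]
      congr 1; omega
    have hle : n - j ≤ n - k := by omega
    have hmain := gbinom_mul_choose ((n:ℝ)+α) (n-k) (n-j) hle
    have hc1 : ((n:ℝ)+α) - ((n-j : ℕ) : ℝ) = α + j := by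
      rw [Nat.cast_sub hj]; ring
    have hc2 : (n-k) - (n-j) = j - k := by omega
    rw [hc1, hc2] at hmain
    rw [hsym]
    calc gbinom ((n:ℝ)+α) (n-k) * gbinom ((n:ℝ)+γ) k * (((n-k).choose (n-j) : ℕ) : ℝ)
        = gbinom ((n:ℝ)+α) (n-k) * (((n-k).choose (n-j) : ℕ) : ℝ) * gbinom ((n:ℝ)+γ) k := by ring
      _ = gbinom ((n:ℝ)+α) (n-j) * gbinom (α+j) (j-k) * gbinom ((n:ℝ)+γ) k := by rw [hmain]
      _ = _ := by ring
  rw [Finset.sum_congr rfl step, ← Finset.mul_sum, vandermonde ((n:ℝ)+γ) (α+j) j]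
  have : (n:ℝ)+γ+(α+j) = (n:ℝ)+α+γ+j := by ring
  rw [this]

lemma jac_rep (α γ : ℝ) (n : ℕ) (x : ℝ) :
    Jac α γ n x = ∑ j ∈ Finset.range (n+1),
      gbinom ((n:ℝ)+α) (n-j) * gbinom ((n:ℝ)+α+γ+j) j * ((x-1)/2)^j := by
  set t : ℝ := (x-1)/2 with ht
  have hxp : (x+1)/2 = t + 1 := by rw [ht]; ring
  rw [Jac]
  simp only [hxp]
  have expand : ∀ k ∈ Finset.range (n+1),
      gbinom ((n:ℝ)+α) (n-k) * gbinom ((n:ℝ)+γ) k * t^k * (t+1)^(n-k)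
      = ∑ i ∈ Finset.range (n-k+1),
          gbinom ((n:ℝ)+α) (n-k) * gbinom ((n:ℝ)+γ) k * (((n-k).choose i : ℕ) : ℝ) * t^(k+i) := by
    intro k _
    rw [add_pow]
    rw [Finset.mul_sum]
    refine Finset.sum_congr rfl fun i _ => ?_
    rw [pow_add]; ring
  rw [Finset.sum_congr rfl expand]
  have target : ∀ j ∈ Finset.range (n+1),
      gbinom ((n:ℝ)+α) (n-j) * gbinom ((n:ℝ)+α+γ+j) j * t^j
      = ∑ k ∈ Finset.range (j+1),
          gbinom ((n:ℝ)+α) (n-k) * gbinom ((n:ℝ)+γ) k * (((n-k).choose (j-k) : ℕ) : ℝ) * t^j := by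
    intro j hj
    rw [Finset.mem_range] at hj
    rw [← Finset.sum_mul, coeff_eq α γ n j (by omega)]
  rw [Finset.sum_congr rfl target, Finset.sum_sigma', Finset.sum_sigma']
  refine Finset.sum_nbij' (fun p => ⟨p.1 + p.2, p.1⟩) (fun p => ⟨p.2, p.1 - p.2⟩) ?_ ?_ ?_ ?_ ?_
  · rintro ⟨k, i⟩ hp
    simp only [Finset.mem_sigma, Finset.mem_range] at hp ⊢
    omega
  · rintro ⟨j, k⟩ hp
    simp only [Finset.mem_sigma, Finset.mem_range] at hp ⊢
    omega
  · rintro ⟨k, i⟩ hp; simp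
  · rintro ⟨j, k⟩ hp
    simp only [Finset.mem_sigma, Finset.mem_range] at hp
    simp only [Sigma.mk.inj_iff]
    constructor
    · omega
    · exact heq_of_eq (by omega)
  · rintro ⟨k, i⟩ hp
    simp only [Finset.mem_sigma, Finset.mem_range] at hp
    simp only
    have h1 : k + i - k = i := by omega
    rw [h1]

lemma Gamma_add_nat {a : ℝ} (ha : 0 < a) (m : ℕ) :
    Real.Gamma (a + m) = poch a m * Real.Gamma a := by
  induction m with
  | zero => simp [poch_zero]
  | succ m ih =>
    have h1 : a + ((m+1 : ℕ) : ℝ) = (a + m) + 1 := by push_cast; ring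
    have h2 : a + (m : ℝ) ≠ 0 := by positivity
    rw [h1, Real.Gamma_add_one h2, ih, poch_succ]; ring

lemma dj_eq (α γ : ℝ) (hα : -1 < α) (n j : ℕ) (hj : j ≤ n) :
    (-1:ℝ)^j * (gbinom ((n:ℝ)+α) (n-j) * gbinom ((n:ℝ)+α+γ+j) j)
    = gbinom ((n:ℝ)+α) n *
      (poch (-(n:ℝ)) j * poch ((n:ℝ)+α+γ+1) j / (poch (α+1) j * (j.factorial : ℝ))) := by
  have e1 : gbinom ((n:ℝ)+α+γ+j) j = poch ((n:ℝ)+α+γ+1) j / (j.factorial : ℝ) := by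
    rw [gbinom, show ((n:ℝ)+α+γ+(j:ℝ)-(j:ℝ)+1) = (n:ℝ)+α+γ+1 from by ring]
  have e2 : gbinom ((n:ℝ)+α) n = poch (α+1) n / (n.factorial : ℝ) := by
    rw [gbinom, show ((n:ℝ)+α-(n:ℝ)+1) = α+1 from by ring]
  have e3 : gbinom ((n:ℝ)+α) (n-j) = poch (α+(j:ℝ)+1) (n-j) / ((n-j).factorial : ℝ) := by
    rw [gbinom]
    congr 2
    rw [Nat.cast_sub hj]; ring
  have e4 : poch (α+1) n = poch (α+1) j * poch (α+(j:ℝ)+1) (n-j) := by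
    have := poch_add (α+1) j (n-j)
    rw [show j + (n-j) = n from by omega] at this
    rw [this, show (α+1+(j:ℝ)) = α+(j:ℝ)+1 from by ring]
  have e5 : poch (-(n:ℝ)) j = (-1:ℝ)^j * ((n.factorial : ℝ) / ((n-j).factorial : ℝ)) := by
    rw [poch_neg]
    congr 1
    have h6 := poch_add 1 (n-j) j
    rw [show (n-j) + j = n from by omega, poch_one, poch_one] at h6
    have h7 : (1 : ℝ) + ((n-j : ℕ) : ℝ) = (n:ℝ) - (j:ℝ) + 1 := by
      rw [Nat.cast_sub hj]; ring
    rw [h7] at h6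
    have h8 : ((n-j).factorial : ℝ) ≠ 0 := Nat.cast_ne_zero.mpr (Nat.factorial_ne_zero _)
    field_simp at h6 ⊢
    linarith [h6]
  have hpj : poch (α+1) j ≠ 0 := ne_of_gt (poch_pos (by linarith) j)
  have hfn : (n.factorial : ℝ) ≠ 0 := Nat.cast_ne_zero.mpr (Nat.factorial_ne_zero _)
  have hfj : (j.factorial : ℝ) ≠ 0 := Nat.cast_ne_zero.mpr (Nat.factorial_ne_zero _)
  have hfnj : ((n-j).factorial : ℝ) ≠ 0 := Nat.cast_ne_zero.mpr (Nat.factorial_ne_zero _)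
  rw [e1, e2, e3, e4, e5]
  field_simp

lemma cpow_eq_on (A B : ℝ) : Set.EqOn (fun x : ℝ => (x:ℂ) ^ ((A:ℂ)+1-1) * ((1:ℂ)-x) ^ ((B:ℂ)+1-1))
    (fun x : ℝ => ((x ^ A * (1-x) ^ B : ℝ) : ℂ)) (Set.uIcc 0 1) := by
  intro x hx
  rw [Set.uIcc_of_le (by norm_num)] at hx
  obtain ⟨h0, h1⟩ := hx
  simp only [add_sub_cancel_right]
  rw [Complex.ofReal_mul, Complex.ofReal_cpow h0, Complex.ofReal_cpow (by linarith)]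
  push_cast
  ring

lemma betaReal {A B : ℝ} (hA : -1 < A) (hB : -1 < B) :
    ∫ x in (0:ℝ)..1, x ^ A * (1-x) ^ B = Gamma (A+1) * Gamma (B+1) / Gamma (A+B+2) := by
  have hs : 0 < ((A:ℂ)+1).re := by simp; linarith
  have ht : 0 < ((B:ℂ)+1).re := by simp; linarith
  have h := Complex.Gamma_mul_Gamma_eq_betaIntegral hs ht
  rw [Complex.betaIntegral] at h
  rw [intervalIntegral.integral_congr (cpow_eq_on A B)] at h
  rw [intervalIntegral.integral_ofReal] at h
  have hst : ((A:ℂ)+1+((B:ℂ)+1)) = ((A+B+2 : ℝ) : ℂ) := by push_cast; ring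
  have h1 : ((A:ℂ)+1) = ((A+1:ℝ):ℂ) := by push_cast; ring
  have h2 : ((B:ℂ)+1) = ((B+1:ℝ):ℂ) := by push_cast; ring
  rw [hst, h1, h2, Complex.Gamma_ofReal, Complex.Gamma_ofReal, Complex.Gamma_ofReal,
    ← Complex.ofReal_mul, ← Complex.ofReal_mul] at h
  have := Complex.ofReal_injective h
  have hpos : 0 < Gamma (A+B+2) := Real.Gamma_pos_of_pos (by linarith)
  field_simp
  linarith [this]

lemma betaIntegrable {A B : ℝ} (hA : -1 < A) (hB : -1 < B) :
    IntegrableOn (fun x : ℝ => x ^ A * (1-x) ^ B) (Set.Ioc 0 1) := by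
  have hs : 0 < ((A:ℂ)+1).re := by simp; linarith
  have ht : 0 < ((B:ℂ)+1).re := by simp; linarith
  have h := Complex.betaIntegral_convergent hs ht
  rw [intervalIntegrable_iff, Set.uIoc_of_le (by norm_num : (0:ℝ) ≤ 1)] at h
  have h2 : IntegrableOn (fun x : ℝ => Complex.re ((x:ℂ) ^ ((A:ℂ)+1-1) * ((1:ℂ)-x) ^ ((B:ℂ)+1-1))) (Set.Ioc 0 1) := h.re
  refine h2.congr_fun ?_ measurableSet_Ioc
  intro x hx
  have := cpow_eq_on A B (by rw [Set.uIcc_of_le (by norm_num)]; exact ⟨hx.1.le, hx.2⟩)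
  simp only at this
  simp only [this, Complex.ofReal_re]

lemma betaIoo {A B : ℝ} (hA : -1 < A) (hB : -1 < B) :
    ∫ x in Set.Ioo (-1:ℝ) 1, (1-x) ^ A * (1+x) ^ B
      = 2 ^ (A+B+1) * (Gamma (A+1) * Gamma (B+1) / Gamma (A+B+2)) := by
  set f : ℝ → ℝ := fun x => (1-x) ^ A * (1+x) ^ B with hf
  have h1 : ∫ x in Set.Ioo (-1:ℝ) 1, f x = ∫ x in (-1:ℝ)..1, f x := by
    rw [intervalIntegral.integral_of_le (by norm_num), MeasureTheory.integral_Ioc_eq_integral_Ioo]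
  have h2 := intervalIntegral.integral_comp_mul_add f (two_ne_zero) (-1) (a := 0) (b := 1)
  rw [show (2:ℝ)*0 + -1 = -1 from by norm_num, show (2:ℝ)*1 + -1 = 1 from by norm_num,
    smul_eq_mul] at h2
  have h2' : ∫ x in (-1:ℝ)..1, f x = 2 * ∫ u in (0:ℝ)..1, f (2*u + -1) := by
    rw [h2]; ring
  have h3 : ∀ u ∈ Set.uIcc (0:ℝ) 1, f (2*u + -1) = (2^A * 2^B) * (u ^ B * (1-u) ^ A) := by
    intro u hu
    rw [Set.uIcc_of_le (by norm_num)] at hu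
    obtain ⟨h0, h1'⟩ := hu
    have e1 : 1 - (2*u + -1) = 2 * (1 - u) := by ring
    have e2 : 1 + (2*u + -1) = 2 * u := by ring
    rw [hf]
    simp only [e1, e2]
    rw [Real.mul_rpow (by norm_num) (by linarith), Real.mul_rpow (by norm_num) (by linarith)]
    ring
  have h4 : (∫ u in (0:ℝ)..1, f (2*u + -1))
      = (2^A * 2^B) * ∫ u in (0:ℝ)..1, u ^ B * (1-u) ^ A := by
    rw [intervalIntegral.integral_congr h3, intervalIntegral.integral_const_mul]
  rw [h1, h2', h4, betaReal hB hA]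
  rw [show A+B+1 = A+(B+1) from by ring, Real.rpow_add two_pos, Real.rpow_add two_pos,
    Real.rpow_one]
  rw [show B+A+2 = A+B+2 from by ring]
  ring

lemma betaIntegrableIoo {A B : ℝ} (hA : -1 < A) (hB : -1 < B) :
    IntegrableOn (fun x : ℝ => (1-x) ^ A * (1+x) ^ B) (Set.Ioo (-1:ℝ) 1) := by
  have h := betaIntegrable hB hA
  have hI : IntervalIntegrable (fun u : ℝ => u ^ B * (1-u) ^ A) volume 0 1 := by
    rw [intervalIntegrable_iff, Set.uIoc_of_le (by norm_num : (0:ℝ) ≤ 1)]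
    exact h
  have h3 := hI.comp_add_right (1/2)
  have h4 := h3.comp_mul_left (c := 1/2)
  norm_num at h4
  rw [intervalIntegrable_iff, Set.uIoc_of_le (by norm_num : (-1:ℝ) ≤ 1)] at h4
  have h5 : IntegrableOn (fun x : ℝ => (x/2 + 1/2) ^ B * (1 - (x/2 + 1/2)) ^ A)
      (Set.Ioo (-1:ℝ) 1) := (h4.mono_set Set.Ioo_subset_Ioc_self).congr_fun
    (fun x _ => by norm_num [div_eq_inv_mul]) measurableSet_Ioo
  have h6 : IntegrableOn (fun x : ℝ => (2^A * 2^B) * ((x/2 + 1/2) ^ B * (1 - (x/2 + 1/2)) ^ A))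
      (Set.Ioo (-1:ℝ) 1) := h5.const_mul (2^A * 2^B)
  refine h6.congr_fun ?_ measurableSet_Ioo
  intro x hx
  obtain ⟨hx1, hx2⟩ := hx
  have e1 : (1:ℝ) - x = 2 * (1 - (x/2+1/2)) := by ring
  have e2 : (1:ℝ) + x = 2 * (x/2+1/2) := by ring
  simp only
  rw [e1, e2, Real.mul_rpow (by norm_num) (by linarith), Real.mul_rpow (by norm_num) (by linarith)]
  ring

lemma F_integrable {A B : ℝ} (hA : -1 < A) (hB : -1 < B) (m : ℕ) :
    IntegrableOn (fun x : ℝ => (1-x) ^ A * (1+x) ^ B * ((x-1)/2)^m) (Set.Ioo (-1:ℝ) 1) := by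
  have hA' : -1 < A + m := by have : (0:ℝ) ≤ m := Nat.cast_nonneg m; linarith
  have h6 : IntegrableOn (fun x : ℝ => ((-1/2 : ℝ)^m) * ((1-x) ^ (A + (m:ℝ)) * (1+x) ^ B))
      (Set.Ioo (-1:ℝ) 1) := (betaIntegrableIoo hA' hB).const_mul ((-1/2 : ℝ)^m)
  refine h6.congr_fun ?_ measurableSet_Ioo
  intro x hx
  obtain ⟨hx1, hx2⟩ := hx
  have h1x : (0:ℝ) < 1 - x := by linarith
  simp only
  rw [Real.rpow_add h1x, Real.rpow_natCast]
  have e : ((x-1)/2)^m = (-1/2 : ℝ)^m * (1-x)^m := by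
    rw [← mul_pow]; congr 1; ring
  rw [e]; ring

lemma F_value {A B : ℝ} (hA : -1 < A) (hB : -1 < B) (m : ℕ) :
    ∫ x in Set.Ioo (-1:ℝ) 1, (1-x) ^ A * (1+x) ^ B * ((x-1)/2)^m
      = (-1:ℝ)^m * (2 ^ (A+B+1) * (Gamma (A+1) * Gamma (B+1) / Gamma (A+B+2))) *
        (poch (A+1) m / poch (A+B+2) m) := by
  have hA' : -1 < A + m := by have : (0:ℝ) ≤ m := Nat.cast_nonneg m; linarith
  have step1 : ∫ x in Set.Ioo (-1:ℝ) 1, (1-x) ^ A * (1+x) ^ B * ((x-1)/2)^m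
      = (-1/2 : ℝ)^m * ∫ x in Set.Ioo (-1:ℝ) 1, (1-x) ^ (A + (m:ℝ)) * (1+x) ^ B := by
    rw [← MeasureTheory.integral_const_mul]
    refine MeasureTheory.setIntegral_congr_fun measurableSet_Ioo ?_
    intro x hx
    obtain ⟨hx1, hx2⟩ := hx
    have h1x : (0:ℝ) < 1 - x := by linarith
    simp only
    rw [Real.rpow_add h1x, Real.rpow_natCast]
    have e : ((x-1)/2)^m = (-1/2 : ℝ)^m * (1-x)^m := by
      rw [← mul_pow]; congr 1; ring
    rw [e]; ring
  rw [step1, betaIoo hA' hB]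
  have hG1 : Gamma (A + (m:ℝ) + 1) = poch (A+1) m * Gamma (A+1) := by
    rw [show A + (m:ℝ) + 1 = (A+1) + (m:ℝ) from by ring, Gamma_add_nat (by linarith) m]
  have hG2 : Gamma (A + (m:ℝ) + B + 2) = poch (A+B+2) m * Gamma (A+B+2) := by
    rw [show A + (m:ℝ) + B + 2 = (A+B+2) + (m:ℝ) from by ring, Gamma_add_nat (by linarith) m]
  have hr : (2:ℝ) ^ (A + (m:ℝ) + B + 1) = 2 ^ (A+B+1) * 2^m := by
    rw [show A + (m:ℝ) + B + 1 = (A+B+1) + (m:ℝ) from by ring, Real.rpow_add two_pos,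
      Real.rpow_natCast]
  rw [hG1, hG2, hr]
  have hpoch : poch (A+B+2) m ≠ 0 := ne_of_gt (poch_pos (by linarith) m)
  have hGam : Gamma (A+B+2) ≠ 0 := ne_of_gt (Real.Gamma_pos_of_pos (by linarith))
  have h2m : (2:ℝ)^m ≠ 0 := by positivity
  have e : (-1/2 : ℝ)^m = (-1:ℝ)^m / 2^m := by
    rw [div_pow]
  rw [e]
  field_simp
/-- Krein-like moment of the Jacobi Rakhmanov density. -/
theorem jacobi_krein_moment (n : ℕ) (α γ k : ℝ) (hα : -1 < α) (hγ : -1 < γ) (hk : 0 < k)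
    (hkα : -1 < (k + 1) * α) (hkγ : -1 < (k + 1) * γ) :
    ∫ x in Set.Ioo (-1 : ℝ) 1,
        (1 - x) ^ ((k + 1) * α) * (1 + x) ^ ((k + 1) * γ) * (Jac α γ n x) ^ 2 =
      ((2 : ℝ) ^ ((k + 1) * (α + γ) + 1) * Real.Gamma (α * (k + 1) + 1) *
          Real.Gamma (γ * (k + 1) + 1) / Real.Gamma ((k + 1) * (α + γ) + 2)) *
        gbinom ((n : ℝ) + α) n ^ 2 *
        ∑ j₁ ∈ Finset.range (n + 1), ∑ j₂ ∈ Finset.range (n + 1),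
          (poch ((k + 1) * α + 1) (j₁ + j₂) / poch ((k + 1) * (α + γ) + 2) (j₁ + j₂)) *
            (poch (-(n : ℝ)) j₁ * poch ((n : ℝ) + α + γ + 1) j₁ *
                poch (-(n : ℝ)) j₂ * poch ((n : ℝ) + α + γ + 1) j₂ /
              (poch (α + 1) j₁ * poch (α + 1) j₂ * (j₁.factorial : ℝ) * (j₂.factorial : ℝ))) := by
  have hA : -1 < (k+1)*α := hkα
  have hB : -1 < (k+1)*γ := hkγ
  set A : ℝ := (k+1)*α with hA_def
  set B : ℝ := (k+1)*γ with hB_def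
  have hexpand : ∀ x : ℝ, (1-x)^A * (1+x)^B * (Jac α γ n x)^2
      = ∑ j₁ ∈ Finset.range (n+1), ∑ j₂ ∈ Finset.range (n+1),
          ((gbinom ((n:ℝ)+α) (n-j₁) * gbinom ((n:ℝ)+α+γ+j₁) j₁) *
           (gbinom ((n:ℝ)+α) (n-j₂) * gbinom ((n:ℝ)+α+γ+j₂) j₂)) *
            ((1-x)^A * (1+x)^B * ((x-1)/2)^(j₁+j₂)) := by
    intro x
    rw [jac_rep α γ n x, sq, Finset.sum_mul_sum]
    rw [Finset.mul_sum]
    refine Finset.sum_congr rfl fun j₁ _ => ?_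
    rw [Finset.mul_sum]
    refine Finset.sum_congr rfl fun j₂ _ => ?_
    rw [pow_add]
    ring
  have hswap : ∫ x in Set.Ioo (-1:ℝ) 1, (1-x)^A * (1+x)^B * (Jac α γ n x)^2
      = ∑ j₁ ∈ Finset.range (n+1), ∑ j₂ ∈ Finset.range (n+1),
          ((gbinom ((n:ℝ)+α) (n-j₁) * gbinom ((n:ℝ)+α+γ+j₁) j₁) *
           (gbinom ((n:ℝ)+α) (n-j₂) * gbinom ((n:ℝ)+α+γ+j₂) j₂)) *
            ∫ x in Set.Ioo (-1:ℝ) 1, (1-x)^A * (1+x)^B * ((x-1)/2)^(j₁+j₂) := by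
    simp only [hexpand]
    rw [MeasureTheory.integral_finset_sum]
    · refine Finset.sum_congr rfl fun j₁ _ => ?_
      rw [MeasureTheory.integral_finset_sum]
      · exact Finset.sum_congr rfl fun j₂ _ => MeasureTheory.integral_const_mul _ _
      · intro j₂ _
        exact (F_integrable hA hB (j₁+j₂)).const_mul _
    · intro j₁ _
      refine MeasureTheory.integrable_finset_sum _ fun j₂ _ => ?_
      exact (F_integrable hA hB (j₁+j₂)).const_mul _
  rw [hswap]
  rw [show (k+1)*(α+γ)+1 = A+B+1 from by rw [hA_def, hB_def]; ring,
    show α*(k+1)+1 = A+1 from by rw [hA_def]; ring,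
    show γ*(k+1)+1 = B+1 from by rw [hB_def]; ring,
    show (k+1)*(α+γ)+2 = A+B+2 from by rw [hA_def, hB_def]; ring]
  rw [Finset.mul_sum]
  refine Finset.sum_congr rfl fun j₁ hj₁ => ?_
  rw [Finset.mul_sum]
  refine Finset.sum_congr rfl fun j₂ hj₂ => ?_
  rw [Finset.mem_range] at hj₁ hj₂
  have h1 := dj_eq α γ hα n j₁ (by omega)
  have h2 := dj_eq α γ hα n j₂ (by omega)
  rw [F_value hA hB (j₁+j₂)]
  set D₁ : ℝ := gbinom ((n:ℝ)+α) (n-j₁) * gbinom ((n:ℝ)+α+γ+j₁) j₁ with hD₁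
  set D₂ : ℝ := gbinom ((n:ℝ)+α) (n-j₂) * gbinom ((n:ℝ)+α+γ+j₂) j₂ with hD₂
  set g : ℝ := gbinom ((n:ℝ)+α) n with hg
  set p₁ : ℝ := poch (-(n:ℝ)) j₁ * poch ((n:ℝ)+α+γ+1) j₁ / (poch (α+1) j₁ * (j₁.factorial : ℝ))
    with hp₁
  set p₂ : ℝ := poch (-(n:ℝ)) j₂ * poch ((n:ℝ)+α+γ+1) j₂ / (poch (α+1) j₂ * (j₂.factorial : ℝ))
    with hp₂
  have e : (-1:ℝ)^(j₁+j₂) * (D₁ * D₂) = (g * p₁) * (g * p₂) := by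
    rw [pow_add]
    calc (-1:ℝ)^j₁ * (-1:ℝ)^j₂ * (D₁ * D₂)
        = ((-1:ℝ)^j₁ * D₁) * ((-1:ℝ)^j₂ * D₂) := by ring
      _ = (g * p₁) * (g * p₂) := by rw [h1, h2]
  calc D₁ * D₂ * ((-1:ℝ)^(j₁+j₂) *
        (2 ^ (A+B+1) * (Gamma (A+1) * Gamma (B+1) / Gamma (A+B+2))) *
        (poch (A+1) (j₁+j₂) / poch (A+B+2) (j₁+j₂)))
      = ((-1:ℝ)^(j₁+j₂) * (D₁ * D₂)) *
        ((2 ^ (A+B+1) * (Gamma (A+1) * Gamma (B+1) / Gamma (A+B+2))) *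
        (poch (A+1) (j₁+j₂) / poch (A+B+2) (j₁+j₂))) := by ring
    _ = ((g * p₁) * (g * p₂)) *
        ((2 ^ (A+B+1) * (Gamma (A+1) * Gamma (B+1) / Gamma (A+B+2))) *
        (poch (A+1) (j₁+j₂) / poch (A+B+2) (j₁+j₂))) := by rw [e]
    _ = 2 ^ (A+B+1) * Gamma (A+1) * Gamma (B+1) / Gamma (A+B+2) * g^2 *
        (poch (A+1) (j₁+j₂) / poch (A+B+2) (j₁+j₂) *
          (poch (-(n:ℝ)) j₁ * poch ((n:ℝ)+α+γ+1) j₁ * poch (-(n:ℝ)) j₂ *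
              poch ((n:ℝ)+α+γ+1) j₂ /
            (poch (α+1) j₁ * poch (α+1) j₂ * (j₁.factorial : ℝ) * (j₂.factorial : ℝ)))) := by
      rw [hp₁, hp₂]; ring
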